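/- arXiv:2101.10924 — 2 statements merged into one kernel-verified Lean document; each statement's English description precedes it below -/
import Mathlib

section
/- The coefficients C_n(r,j) (as in the previous setup) satisfy the scaling symmetry C_n(r,j) = (r+1)^n · C_n(−r/(r+1), (j−r)/(r+1)) as an identity of rational functions of r and j. -/
noncomputable section

/-- The field `ℚ(r,j)` of rational functions in the two formal variables `r`, `j`. -/
abbrev KK : Type := FractionRing (MvPolynomial (Fin 2) ℚ)

/-- The formal variable `r` as an element of `ℚ(r,j)`. -/
def Rv : KK := algebraMap (MvPolynomial (Fin 2) ℚ) KK (MvPolynomial.X 0)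

/-- The formal variable `j` as an element of `ℚ(r,j)`. -/
def Jv : KK := algebraMap (MvPolynomial (Fin 2) ℚ) KK (MvPolynomial.X 1)

/-- Generalized binomial coefficient `binom(a,k) = a(a-1)⋯(a-k+1)/k!`. -/
def gbinom (a : KK) (k : ℕ) : KK :=
  (∏ i ∈ Finset.range k, (a - (i : KK))) / (k.factorial : KK)

/-- The binomial-series power `(1+v)^a = Σ_k binom(a,k) v^k`, well defined as a power
series when `v` has zero constant term. -/
def bpow (a : KK) (v : PowerSeries KK) : PowerSeries KK :=
  PowerSeries.mk fun n =>
    ∑ k ∈ Finset.range (n + 1), gbinom a k * PowerSeries.coeff n (v ^ k)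

/-- `isW ρ w` says that `w = w(u) ∈ 1 + u + u²·[[u]]` solves
`w^{ρ+1}/(ρ(ρ+1)) - w/ρ + 1/(ρ+1) = u²/2`, where `w^{ρ+1}` is the binomial series
`(1 + (w-1))^{ρ+1}`. -/
def isW (ρ : KK) (w : PowerSeries KK) : Prop :=
  PowerSeries.coeff 0 w = 1 ∧ PowerSeries.coeff 1 w = 1 ∧
    PowerSeries.C (ρ * (ρ + 1))⁻¹ * bpow (ρ + 1) (w - 1)
        - PowerSeries.C ρ⁻¹ * w + PowerSeries.C (ρ + 1)⁻¹
      = PowerSeries.C (2 : KK)⁻¹ * PowerSeries.X ^ 2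

/-- `Cco a w n` is the coefficient `C_n(r,a)`: the coefficient of `u^{n+1}` in
`(w^{a+1} - 1)/(a+1)`. -/
def Cco (a : KK) (w : PowerSeries KK) (n : ℕ) : KK :=
  (a + 1)⁻¹ * PowerSeries.coeff (n + 1) (bpow (a + 1) (w - 1) - 1)

/-- `fT a w` is the series `f_a(T) = Σ_{k≥0} (2k+1)!! C_{2k}(r,a) (-T)^k`. -/
def fT (a : KK) (w : PowerSeries KK) : PowerSeries KK :=
  PowerSeries.mk fun k =>
    (Nat.doubleFactorial (2 * k + 1) : KK) * Cco a w (2 * k) * (-1) ^ k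

/-- The formal derivative `d/dT` of a power series. -/
def psDeriv (f : PowerSeries KK) : PowerSeries KK :=
  PowerSeries.mk fun n => ((n : KK) + 1) * PowerSeries.coeff (n + 1) f


open PowerSeries Finset


-- coeff of power vanishes below order
lemma coeff_pow_zero {v : PowerSeries KK} (hv : constantCoeff v = 0) :
    ∀ k n : ℕ, n < k → coeff n (v ^ k) = 0 := by
  intro k
  induction k with
  | zero => omega
  | succ k ih =>
    intro n hn
    rw [pow_succ, coeff_mul]
    apply Finset.sum_eq_zero
    rintro ⟨i, j⟩ hij
    simp only [Finset.HasAntidiagonal.mem_antidiagonal] at hij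
    rcases lt_or_ge i k with h | h
    · rw [ih i h, zero_mul]
    · have : j = 0 := by omega
      subst this
      rw [coeff_zero_eq_constantCoeff, hv, mul_zero]

lemma gbinom_natCast (m k : ℕ) : gbinom (m : KK) k = (m.choose k : KK) := by
  rcases le_or_gt k m with h | h
  · have hprod : (∏ i ∈ Finset.range k, ((m : KK) - (i : KK))) = (m.descFactorial k : KK) := by
      induction k with
      | zero => simp
      | succ k ih =>
        have hk : k ≤ m := by omega
        rw [Finset.prod_range_succ, ih (by omega), Nat.descFactorial_succ]
        push_cast [Nat.cast_sub hk]
        ring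
    rw [gbinom, hprod, Nat.descFactorial_eq_factorial_mul_choose]
    push_cast
    have hk : (k.factorial : KK) ≠ 0 := Nat.cast_ne_zero.mpr k.factorial_ne_zero
    field_simp
  · -- k > m : both sides zero
    rw [gbinom, Nat.choose_eq_zero_of_lt h]
    have : (∏ i ∈ Finset.range k, ((m : KK) - (i : KK))) = 0 := by
      apply Finset.prod_eq_zero (Finset.mem_range.mpr h)
      simp
    rw [this]
    simp

lemma gbinom_zero (a : KK) : gbinom a 0 = 1 := by simp [gbinom]

lemma gbinom_one (a : KK) : gbinom a 1 = a := by simp [gbinom]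

lemma gbinom_two (a : KK) : gbinom a 2 = a * (a - 1) / 2 := by
  simp [gbinom, Finset.prod_range_succ]

lemma constantCoeff_bpow (a : KK) (v : PowerSeries KK) (hv : constantCoeff v = 0) :
    constantCoeff (bpow a v) = 1 := by
  rw [← coeff_zero_eq_constantCoeff, bpow, coeff_mk]
  simp [gbinom_zero]

lemma bpow_natCast {v : PowerSeries KK} (hv : constantCoeff v = 0) (m : ℕ) :
    bpow (m : KK) v = (1 + v) ^ m := by
  ext n
  rw [bpow, coeff_mk, add_comm (1 : PowerSeries KK) v, add_pow, map_sum]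
  simp_rw [one_pow, mul_one, gbinom_natCast]
  have hcast : ∀ k : ℕ, ((m.choose k : ℕ) : PowerSeries KK) = PowerSeries.C ((m.choose k : ℕ) : KK) :=
    fun k => (map_natCast (PowerSeries.C) _).symm
  simp_rw [hcast, PowerSeries.coeff_mul_C]
  have L : (∑ k ∈ range (n + 1), (m.choose k : KK) * coeff n (v ^ k))
      = ∑ k ∈ range (n + m + 2), (m.choose k : KK) * coeff n (v ^ k) := by
    apply Finset.sum_subset
    · intro k hk; simp only [Finset.mem_range] at *; omega
    · intro k _ hk
      simp only [Finset.mem_range, not_lt] at hk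
      rw [coeff_pow_zero hv k n (by omega), mul_zero]
  have R : (∑ k ∈ range (m + 1), coeff n (v ^ k) * (m.choose k : KK))
      = ∑ k ∈ range (n + m + 2), coeff n (v ^ k) * (m.choose k : KK) := by
    apply Finset.sum_subset
    · intro k hk; simp only [Finset.mem_range] at *; omega
    · intro k _ hk
      simp only [Finset.mem_range, not_lt] at hk
      rw [Nat.choose_eq_zero_of_lt (by omega), Nat.cast_zero, mul_zero]
  rw [L, R]
  exact Finset.sum_congr rfl fun k _ => mul_comm _ _

open Polynomial in
/-- `gbinom` as a polynomial in the exponent. -/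
def gbPoly (k : ℕ) : Polynomial KK :=
  (∏ i ∈ Finset.range k, (Polynomial.X - Polynomial.C (i : KK))) *
    Polynomial.C ((k.factorial : KK)⁻¹)

lemma gbPoly_eval (a : KK) (k : ℕ) : (gbPoly k).eval a = gbinom a k := by
  simp [gbPoly, gbinom, Polynomial.eval_prod, div_eq_mul_inv]

/-- coefficient of `bpow · v` as a polynomial in the exponent. -/
def bcoPoly (v : PowerSeries KK) (n : ℕ) : Polynomial KK :=
  ∑ k ∈ Finset.range (n + 1), gbPoly k * Polynomial.C (coeff n (v ^ k))

lemma bcoPoly_eval (v : PowerSeries KK) (n : ℕ) (a : KK) :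
    (bcoPoly v n).eval a = coeff n (bpow a v) := by
  simp only [bcoPoly, bpow, coeff_mk, Polynomial.eval_finset_sum, Polynomial.eval_mul,
    Polynomial.eval_C, gbPoly_eval]

/-- `bpow` with polynomial-variable exponent. -/
def BP (v : PowerSeries KK) : PowerSeries (Polynomial KK) :=
  PowerSeries.mk fun n => bcoPoly v n

lemma BP_map (v : PowerSeries KK) (b : KK) :
    PowerSeries.map (Polynomial.evalRingHom b) (BP v) = bpow b v := by
  ext n
  rw [PowerSeries.coeff_map]
  simp [BP, bcoPoly_eval]

lemma poly_ext {p q : Polynomial KK} (h : ∀ m : ℕ, p.eval (m : KK) = q.eval (m : KK)) :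
    p = q := by
  rw [← sub_eq_zero]
  apply Polynomial.eq_zero_of_infinite_isRoot
  apply Set.Infinite.mono (s := Set.range (fun m : ℕ => (m : KK)))
  · rintro x ⟨m, rfl⟩
    simp [Polynomial.IsRoot, h m]
  · exact Set.infinite_range_of_injective Nat.cast_injective

lemma constA {v : PowerSeries KK} (hv : constantCoeff v = 0) (m : ℕ) :
    constantCoeff ((1 + v) ^ m - 1) = 0 := by
  rw [map_sub, map_pow, map_add, map_one, hv, add_zero, one_pow, sub_self]

lemma bpow_comp_nat {v : PowerSeries KK} (hv : constantCoeff v = 0) (m : ℕ) (a : KK) :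
    bpow a ((1 + v) ^ m - 1) = bpow (a * m) v := by
  ext n
  rw [← bcoPoly_eval, ← bcoPoly_eval]
  have : (bcoPoly v n).eval (a * (m : KK))
      = ((bcoPoly v n).comp (Polynomial.X * Polynomial.C (m : KK))).eval a := by
    rw [Polynomial.eval_comp]; simp
  rw [this]
  have key : bcoPoly ((1 + v) ^ m - 1) n
      = (bcoPoly v n).comp (Polynomial.X * Polynomial.C (m : KK)) := by
    apply poly_ext
    intro l
    rw [Polynomial.eval_comp]
    simp only [Polynomial.eval_mul, Polynomial.eval_X, Polynomial.eval_C]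
    rw [bcoPoly_eval, bcoPoly_eval, bpow_natCast (constA hv m),
      show (1 : PowerSeries KK) + ((1 + v) ^ m - 1) = (1 + v) ^ m by ring, ← pow_mul]
    have : ((l : KK) * m) = ((m * l : ℕ) : KK) := by push_cast; ring
    rw [this, bpow_natCast hv]
  rw [key]

lemma bpow_comp {v : PowerSeries KK} (hv : constantCoeff v = 0) (a b : KK) :
    bpow a (bpow b v - 1) = bpow (a * b) v := by
  ext n
  set P : Polynomial KK :=
    ∑ k ∈ Finset.range (n + 1),
      Polynomial.C (gbinom a k) * PowerSeries.coeff n ((BP v - 1) ^ k) with hP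
  have hmap : ∀ c : KK, PowerSeries.map (Polynomial.evalRingHom c) (BP v - 1) = bpow c v - 1 := by
    intro c; rw [map_sub, map_one, BP_map]
  have hPeval : ∀ c : KK, P.eval c
      = ∑ k ∈ Finset.range (n + 1), gbinom a k * coeff n ((bpow c v - 1) ^ k) := by
    intro c
    rw [hP, Polynomial.eval_finset_sum]
    refine Finset.sum_congr rfl fun k _ => ?_
    rw [Polynomial.eval_mul, Polynomial.eval_C]
    congr 1
    have : ((bpow c v - 1) ^ k) = PowerSeries.map (Polynomial.evalRingHom c) ((BP v - 1) ^ k) := by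
      rw [map_pow, hmap]
    rw [this, PowerSeries.coeff_map]
    rfl
  have hLHS : coeff n (bpow a (bpow b v - 1)) = P.eval b := by
    rw [hPeval, bpow, coeff_mk]
  have hRHS : coeff n (bpow (a * b) v)
      = ((bcoPoly v n).comp (Polynomial.C a * Polynomial.X)).eval b := by
    rw [Polynomial.eval_comp]
    simp only [Polynomial.eval_mul, Polynomial.eval_X, Polynomial.eval_C]
    rw [bcoPoly_eval]
  rw [hLHS, hRHS]
  congr 1
  apply poly_ext
  intro m
  rw [hPeval, Polynomial.eval_comp]
  simp only [Polynomial.eval_mul, Polynomial.eval_X, Polynomial.eval_C]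
  have h1 : bpow ((m : KK)) v - 1 = (1 + v) ^ m - 1 := by rw [bpow_natCast hv]
  calc (∑ k ∈ Finset.range (n + 1), gbinom a k * coeff n ((bpow (m:KK) v - 1) ^ k))
      = coeff n (bpow a ((1 + v) ^ m - 1)) := by rw [h1, bpow, coeff_mk]
    _ = coeff n (bpow (a * m) v) := by rw [bpow_comp_nat hv]
    _ = (bcoPoly v n).eval (a * m) := (bcoPoly_eval v n _).symm

lemma bpow_one {v : PowerSeries KK} (hv : constantCoeff v = 0) :
    bpow (1 : KK) v = 1 + v := by
  have := bpow_natCast hv 1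
  rw [Nat.cast_one] at this
  rw [this, pow_one]

lemma rescale_bpow (c : KK) (a : KK) (v : PowerSeries KK) :
    PowerSeries.rescale c (bpow a v) = bpow a (PowerSeries.rescale c v) := by
  ext n
  rw [PowerSeries.coeff_rescale, bpow, bpow, coeff_mk, coeff_mk, Finset.mul_sum]
  refine Finset.sum_congr rfl fun k _ => ?_
  rw [← map_pow, PowerSeries.coeff_rescale]
  ring

lemma coeff_zero_pow' (e : PowerSeries KK) (he : constantCoeff e = 0) (k : ℕ) :
    coeff 0 (e ^ k) = if k = 0 then 1 else 0 := by
  rw [coeff_zero_eq_constantCoeff, map_pow, he]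
  cases k <;> simp

lemma coeff_one_pow' (e : PowerSeries KK) (he : constantCoeff e = 0) (k : ℕ) :
    coeff 1 (e ^ k) = if k = 1 then coeff 1 e else 0 := by
  match k with
  | 0 => simp
  | 1 => simp
  | (k+2) =>
    rw [if_neg (by omega)]
    exact coeff_pow_zero (by rw [← coeff_zero_eq_constantCoeff] at he ⊢; exact he) (k+2) 1 (by omega)


lemma coeff_one_mul' (f g : PowerSeries KK) :
    coeff 1 (f * g) = coeff 0 f * coeff 1 g + coeff 1 f * coeff 0 g := by
  rw [PowerSeries.coeff_mul, Finset.Nat.sum_antidiagonal_eq_sum_range_succ_mk,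
    Finset.sum_range_succ, Finset.sum_range_one]

set_option maxHeartbeats 2000000 in
lemma isW_unique {ρ : KK} (h0 : ρ ≠ 0) (h1 : ρ + 1 ≠ 0) {w1 w2 : PowerSeries KK}
    (H1 : isW ρ w1) (H2 : isW ρ w2) : w1 = w2 := by
  obtain ⟨c10, c11, heq1⟩ := H1
  obtain ⟨c20, c21, heq2⟩ := H2
  have hE10 : constantCoeff (w1 - 1) = 0 := by
    rw [map_sub, map_one, ← coeff_zero_eq_constantCoeff, c10, sub_self]
  have hE20 : constantCoeff (w2 - 1) = 0 := by
    rw [map_sub, map_one, ← coeff_zero_eq_constantCoeff, c20, sub_self]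
  have hE11 : coeff 1 (w1 - 1) = 1 := by
    rw [map_sub, c11, PowerSeries.coeff_one, if_neg one_ne_zero, sub_zero]
  have hE21 : coeff 1 (w2 - 1) = 1 := by
    rw [map_sub, c21, PowerSeries.coeff_one, if_neg one_ne_zero, sub_zero]
  have key : ∀ n : ℕ, coeff n w1 = coeff n w2 := by
    intro n
    induction n using Nat.strong_induction_on with
    | _ n IH =>
      match n, IH with
      | 0, _ => rw [c10, c20]
      | 1, _ => rw [c11, c21]
      | (m+2), IH =>
        have hD : ∀ j < m + 2, coeff j (w1 - w2) = 0 := by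
          intro j hj; rw [map_sub, IH j hj, sub_self]
        set dN := coeff (m+3) (w1 - w2) with hdN
        set dn := coeff (m+2) (w1 - w2) with hdn
        -- per-k coefficient of difference of powers
        have hk : ∀ k : ℕ, coeff (m+3) ((w1-1)^k - (w2-1)^k)
            = (if k = 1 then dN else 0) + (if k = 2 then 2 * dn else 0) := by
          intro k
          have hgeom := geom_sum₂_mul (w1-1) (w2-1) k
          have hD' : (w1 - 1) - (w2 - 1) = w1 - w2 := by ring
          rw [← hgeom, hD', PowerSeries.coeff_mul,
            Finset.Nat.sum_antidiagonal_eq_sum_range_succ_mk]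
          set g := ∑ i ∈ Finset.range k, (w1-1)^i * (w2-1)^(k-1-i) with hg
          have hg0 : coeff 0 g = if k = 1 then 1 else 0 := by
            rw [hg, map_sum]
            have : ∀ i ∈ Finset.range k, coeff 0 ((w1-1)^i * (w2-1)^(k-1-i))
                = if i = 0 ∧ k = 1 then 1 else 0 := by
              intro i hi
              simp only [Finset.mem_range] at hi
              rw [coeff_zero_eq_constantCoeff, map_mul, map_pow, map_pow, hE10, hE20]
              by_cases hi0 : i = 0
              · subst hi0
                simp only [pow_zero, one_mul]
                by_cases hk1 : k = 1
                · subst hk1; simp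
                · rw [if_neg (by tauto), zero_pow (by omega)]
              · rw [if_neg (by tauto), zero_pow hi0, zero_mul]
            rw [Finset.sum_congr rfl this]
            by_cases hk1 : k = 1
            · subst hk1; simp
            · rw [if_neg hk1]
              apply Finset.sum_eq_zero
              intro i _
              rw [if_neg (by tauto)]
          have hg1 : coeff 1 g = if k = 2 then 2 else 0 := by
            rw [hg, map_sum]
            have : ∀ i ∈ Finset.range k, coeff 1 ((w1-1)^i * (w2-1)^(k-1-i))
                = if k = 2 then 1 else 0 := by
              intro i hi
              simp only [Finset.mem_range] at hi
              rw [coeff_one_mul', coeff_zero_pow' _ hE10, coeff_zero_pow' _ hE20,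
                coeff_one_pow' _ hE10, coeff_one_pow' _ hE20, hE11, hE21]
              by_cases hk2 : k = 2
              · subst hk2; rw [if_pos rfl]
                interval_cases i <;> norm_num
              · rw [if_neg hk2]
                split_ifs <;> first | (norm_num; done) | omega | norm_num
            rw [Finset.sum_congr rfl this]
            by_cases hk2 : k = 2
            · subst hk2; simp
            · simp [hk2]
          have hzero : ∀ i ∈ Finset.range (m+4), i ∉ Finset.range 2 →
              coeff i g * coeff (m+3-i) (w1 - w2) = 0 := by
            intro i _ hi2
            simp only [Finset.mem_range, not_lt] at hi2
            rw [hD (m+3-i) (by omega), mul_zero]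
          rw [← Finset.sum_subset (Finset.range_subset_range.mpr (by omega : 2 ≤ m+4)) hzero]
          rw [Finset.sum_range_succ, Finset.sum_range_one]
          have h30 : m + 3 - 0 = m + 3 := rfl
          have h31 : m + 3 - 1 = m + 2 := rfl
          rw [h30, h31, hg0, hg1, ← hdN, ← hdn]
          split_ifs <;> ring
        -- sum over k
        have hsum : (∑ k ∈ Finset.range (m+4), gbinom (ρ+1) k * coeff (m+3) ((w1-1)^k))
            - (∑ k ∈ Finset.range (m+4), gbinom (ρ+1) k * coeff (m+3) ((w2-1)^k))
            = (ρ+1) * dN + ρ * (ρ+1) * dn := by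
          rw [← Finset.sum_sub_distrib]
          have : ∀ k ∈ Finset.range (m+4),
              gbinom (ρ+1) k * coeff (m+3) ((w1-1)^k)
                - gbinom (ρ+1) k * coeff (m+3) ((w2-1)^k)
              = (if k = 1 then gbinom (ρ+1) 1 * dN else 0)
                + (if k = 2 then gbinom (ρ+1) 2 * (2 * dn) else 0) := by
            intro k _
            rw [← mul_sub, ← map_sub, hk k, mul_add]
            by_cases e1 : k = 1
            · subst e1; norm_num
            · by_cases e2 : k = 2
              · subst e2; norm_num
              · simp [e1, e2]
          rw [Finset.sum_congr rfl this, Finset.sum_add_distrib,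
            Finset.sum_ite_eq' (Finset.range (m+4)) 1,
            Finset.sum_ite_eq' (Finset.range (m+4)) 2,
            if_pos (Finset.mem_range.mpr (by omega)), if_pos (Finset.mem_range.mpr (by omega)),
            gbinom_one, gbinom_two]
          ring
        -- coefficient (m+3) of the two equations
        have e1 := congrArg (coeff (m+3)) heq1
        have e2 := congrArg (coeff (m+3)) heq2
        rw [map_add, map_sub, PowerSeries.coeff_C_mul, PowerSeries.coeff_C_mul] at e1 e2
        have e3 : (ρ * (ρ+1))⁻¹ * (coeff (m+3) (bpow (ρ+1) (w1-1))
              - coeff (m+3) (bpow (ρ+1) (w2-1)))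
            = ρ⁻¹ * dN := by
          rw [hdN, map_sub]
          linear_combination e1 - e2
        rw [show coeff (m+3) (bpow (ρ+1) (w1-1))
            = ∑ k ∈ Finset.range (m+4), gbinom (ρ+1) k * coeff (m+3) ((w1-1)^k) from by
              rw [bpow, coeff_mk],
          show coeff (m+3) (bpow (ρ+1) (w2-1))
            = ∑ k ∈ Finset.range (m+4), gbinom (ρ+1) k * coeff (m+3) ((w2-1)^k) from by
              rw [bpow, coeff_mk], hsum] at e3
        have h2 : (ρ+1) * dN + ρ * (ρ+1) * dn = ρ * (ρ+1) * (ρ⁻¹ * dN) := by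
          rw [← e3, ← mul_assoc, mul_inv_cancel₀ (mul_ne_zero h0 h1), one_mul]
        have h3 : ρ * (ρ+1) * (ρ⁻¹ * dN) = (ρ+1) * dN := by
          rw [show ρ * (ρ+1) * (ρ⁻¹ * dN) = (ρ * ρ⁻¹) * ((ρ+1) * dN) by ring,
            mul_inv_cancel₀ h0, one_mul]
        have h4 : ρ * (ρ+1) * dn = 0 := by linear_combination h2 + h3
        have hdn0 : dn = 0 := by
          rcases mul_eq_zero.mp h4 with h | h
          · exact absurd h (mul_ne_zero h0 h1)
          · exact h
        rw [hdn, map_sub, sub_eq_zero] at hdn0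
        exact hdn0
  ext n
  exact key n


lemma rescale_C' (c x : KK) : PowerSeries.rescale c (PowerSeries.C x) = PowerSeries.C x := by
  ext n
  rw [PowerSeries.coeff_rescale, PowerSeries.coeff_C]
  split_ifs with h
  · subst h; rw [pow_zero, one_mul]
  · rw [mul_zero]

lemma map_ne_zero' (p : MvPolynomial (Fin 2) ℚ) (hp : p ≠ 0) :
    algebraMap (MvPolynomial (Fin 2) ℚ) KK p ≠ 0 := by
  rw [Ne, IsFractionRing.to_map_eq_zero_iff]
  exact hp

lemma Rv_ne : Rv ≠ 0 := map_ne_zero' _ (MvPolynomial.X_ne_zero 0)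

lemma Rv1_ne : Rv + 1 ≠ 0 := by
  have : Rv + 1 = algebraMap (MvPolynomial (Fin 2) ℚ) KK (MvPolynomial.X 0 + 1) := by
    rw [map_add, map_one, Rv]
  rw [this]
  apply map_ne_zero'
  intro h
  have := congrArg (MvPolynomial.coeff 0) h
  simp [MvPolynomial.coeff_zero_X] at this


set_option maxHeartbeats 4000000 in
/-- The scaling symmetry `C_n(r,j) = (r+1)^n · C_n(-r/(r+1), (j-r)/(r+1))`, where `w` is
the solution of the defining equation with parameter `r` and `w'` the one with parameter
`-r/(r+1)`. -/
theorem stmt6 (n : ℕ) (w w' : PowerSeries KK)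
    (hw : isW Rv w) (hw' : isW (-Rv / (Rv + 1)) w') :
    Cco Jv w n = (Rv + 1) ^ n * Cco ((Jv - Rv) / (Rv + 1)) w' n := by
  obtain ⟨hw0, hw1, hweq⟩ := hw
  have hr0 : Rv ≠ 0 := Rv_ne
  have hr1 : Rv + 1 ≠ 0 := Rv1_ne
  set ρ : KK := -Rv / (Rv + 1) with hρ
  have hρ0 : ρ ≠ 0 := div_ne_zero (neg_ne_zero.mpr hr0) hr1
  have key3 : (ρ + 1) * (Rv + 1) = 1 := by
    rw [hρ]; field_simp; ring
  have hρ1 : ρ + 1 ≠ 0 := left_ne_zero_of_mul_eq_one key3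
  have hE0 : constantCoeff (w - 1) = 0 := by
    rw [map_sub, map_one, ← coeff_zero_eq_constantCoeff, hw0, sub_self]
  have hE1 : coeff 1 (w - 1) = 1 := by
    rw [map_sub, hw1, PowerSeries.coeff_one, if_neg one_ne_zero, sub_zero]
  set B : PowerSeries KK := bpow (Rv + 1) (w - 1) with hB
  set W : PowerSeries KK := PowerSeries.rescale (Rv + 1)⁻¹ B with hW
  -- the candidate W satisfies isW ρ
  have hWm1 : W - 1 = PowerSeries.rescale (Rv + 1)⁻¹ (B - 1) := by
    rw [map_sub, map_one]
  have hB0 : constantCoeff B = 1 := constantCoeff_bpow _ _ hE0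
  have key1 : bpow (ρ + 1) (W - 1) = PowerSeries.rescale (Rv + 1)⁻¹ w := by
    rw [hWm1, ← rescale_bpow, bpow_comp hE0, key3, bpow_one hE0]
    congr 1
    ring
  have hisW : isW ρ W := by
    refine ⟨?_, ?_, ?_⟩
    · rw [hW, PowerSeries.coeff_rescale, pow_zero, one_mul, coeff_zero_eq_constantCoeff, hB0]
    · rw [hW, PowerSeries.coeff_rescale, pow_one, hB, bpow, coeff_mk]
      rw [Finset.sum_range_succ, Finset.sum_range_one]
      rw [pow_zero, pow_one, hE1, gbinom_zero, gbinom_one]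
      simp only [PowerSeries.coeff_one, if_neg one_ne_zero, mul_zero, one_mul, zero_add, mul_one]
      rw [inv_mul_cancel₀ hr1]
    · rw [key1]
      have hinvr : Rv * Rv⁻¹ = 1 := mul_inv_cancel₀ hr0
      have hinvr1 : (Rv + 1) * (Rv + 1)⁻¹ = 1 := mul_inv_cancel₀ hr1
      have hρinv : ρ⁻¹ = -((Rv + 1) * Rv⁻¹) := by
        apply inv_eq_of_mul_eq_one_right
        rw [hρ, div_eq_mul_inv]
        linear_combination (Rv * Rv⁻¹) * hinvr1 + hinvr
      have hρ1eq : ρ + 1 = (Rv + 1)⁻¹ := eq_inv_of_mul_eq_one_left key3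
      have s1 : (ρ * (ρ + 1))⁻¹ = -((Rv + 1) ^ 2 * Rv⁻¹) := by
        rw [hρ1eq, mul_inv, inv_inv, hρinv]
        ring
      have s3 : (ρ + 1)⁻¹ = Rv + 1 := by rw [hρ1eq, inv_inv]
      have hP : (Rv * (Rv + 1))⁻¹ = Rv⁻¹ * (Rv + 1)⁻¹ := mul_inv Rv (Rv + 1)
      have hC1 : PowerSeries.C (Rv + 1) * PowerSeries.C (Rv + 1)⁻¹ = 1 := by
        rw [← map_mul, hinvr1, map_one]
      have expand : PowerSeries.C (ρ * (ρ + 1))⁻¹ * w - PowerSeries.C ρ⁻¹ * B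
            + PowerSeries.C (ρ + 1)⁻¹
          = PowerSeries.C ((Rv+1)^2) *
            (PowerSeries.C (Rv * (Rv + 1))⁻¹ * B - PowerSeries.C Rv⁻¹ * w
              + PowerSeries.C (Rv + 1)⁻¹) := by
        rw [s1, hρinv, s3, hP]
        simp only [map_neg, map_mul, map_pow]
        linear_combination (-(PowerSeries.C (Rv+1) * PowerSeries.C Rv⁻¹ * B)
          - PowerSeries.C (Rv+1)) * hC1
      calc PowerSeries.C (ρ * (ρ + 1))⁻¹ * PowerSeries.rescale (Rv + 1)⁻¹ w
            - PowerSeries.C ρ⁻¹ * W + PowerSeries.C (ρ + 1)⁻¹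
          = PowerSeries.rescale (Rv + 1)⁻¹ (PowerSeries.C (ρ * (ρ + 1))⁻¹ * w
              - PowerSeries.C ρ⁻¹ * B + PowerSeries.C (ρ + 1)⁻¹) := by
            rw [map_add, map_sub, map_mul, map_mul, rescale_C', rescale_C', rescale_C', hW]
        _ = PowerSeries.rescale (Rv + 1)⁻¹ (PowerSeries.C ((Rv+1)^2)
              * (PowerSeries.C (2:KK)⁻¹ * PowerSeries.X ^ 2)) := by
            rw [expand, hweq]
        _ = PowerSeries.C (2:KK)⁻¹ * PowerSeries.X ^ 2 := by
            rw [map_mul, map_mul, rescale_C', rescale_C',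
              map_pow (PowerSeries.rescale (Rv + 1)⁻¹) PowerSeries.X 2, PowerSeries.rescale_X]
            rw [mul_pow, ← map_pow, ← mul_assoc, ← mul_assoc, ← map_mul, ← map_mul]
            congr 1
            congr 1
            have h2 : (Rv+1)^2 * ((Rv+1)⁻¹)^2 = 1 := by
              rw [← mul_pow, mul_inv_cancel₀ hr1, one_pow]
            linear_combination (2:KK)⁻¹ * h2
  -- uniqueness identifies w' with W
  have hww : w' = W := isW_unique hρ0 hρ1 hw' hisW
  subst hww
  -- now compute both sides
  set a : KK := (Jv - Rv) / (Rv + 1) with ha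
  have ha1 : a + 1 = (Jv + 1) * (Rv + 1)⁻¹ := by
    rw [ha]; field_simp; ring
  have hscale : (a + 1) * (Rv + 1) = Jv + 1 := by
    rw [ha1, mul_assoc, inv_mul_cancel₀ hr1, mul_one]
  have hBW : bpow (a + 1) (W - 1) = PowerSeries.rescale (Rv + 1)⁻¹ (bpow (Jv + 1) (w - 1)) := by
    rw [hWm1, ← rescale_bpow, bpow_comp hE0, hscale]
  have hcoeff1 : coeff (n+1) (bpow (Jv + 1) (w - 1) - 1)
      = coeff (n+1) (bpow (Jv + 1) (w - 1)) := by
    rw [map_sub, PowerSeries.coeff_one, if_neg (Nat.succ_ne_zero n), sub_zero]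
  have hcoeff2 : coeff (n+1) (bpow (a + 1) (W - 1) - 1)
      = (Rv + 1)⁻¹^(n+1) * coeff (n+1) (bpow (Jv + 1) (w - 1)) := by
    rw [map_sub, PowerSeries.coeff_one, if_neg (Nat.succ_ne_zero n), sub_zero, hBW,
      PowerSeries.coeff_rescale]
  have hainv : (a + 1)⁻¹ = (Rv + 1) * (Jv + 1)⁻¹ := by
    rw [ha1, mul_inv, inv_inv, mul_comm]
  have hcpow : (Rv + 1) ^ (n+1) * ((Rv + 1)⁻¹) ^ (n+1) = 1 := by
    rw [← mul_pow, mul_inv_cancel₀ hr1, one_pow]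
  rw [Cco, Cco, hcoeff1, hcoeff2, hainv]
  linear_combination (-((Jv + 1)⁻¹ * coeff (n+1) (bpow (Jv + 1) (w - 1)))) * hcpow


end
end

section
/- Let r ≥ 2 be an integer, C a constant, and L = ∂^r + C·x the differential operator acting on functions of x (∂ = d/dx). For λ ∈ ℂ the pseudodifferential operator L^λ has the expansion L^λ = Σ_{j,s ≥ 0} C^{j+s}·d_{j,s}(λ,r)·x^s·∂^{r(λ−s)−(r+1)j}, where d_{j,s}(λ,r) = (1/s!)·Σ_{p=0}^{j} c_{p,j}(r)·(λ)⁻_{s+p+j}, with (λ)⁻_n = λ(λ−1)⋯(λ−n+1) the descending Pochhammer symbol and c_{p,j}(r) defined by (1/p!)·(((1+x)^{r+1}−1−(r+1)x)/((r+1)x))^p = Σ_j c_{p,j}(r)x^j. In particular, for λ a non-negative integer the claim is the exact operator identity, provable by induction via L^{λ+1} = L^λ·L. -/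
/-- The power series `G(x) = ((1+x)^{r+1} - 1 - (r+1)x)/((r+1)x)`, whose coefficient of
`x^j` (for `j ≥ 1`) is `binom(r+1,j+1)/(r+1) = binom(r,j)/(j+1)`. -/
noncomputable def cG (r : ℕ) : PowerSeries ℚ :=
  PowerSeries.mk fun j => if j = 0 then 0 else (Nat.choose r j : ℚ) / ((j : ℚ) + 1)

/-- `c_{p,j}(r)`: the coefficient of `x^j` in `(1/p!)·G(x)^p`. -/
noncomputable def cpj (r p j : ℕ) : ℚ :=
  (p.factorial : ℚ)⁻¹ * PowerSeries.coeff j ((cG r) ^ p)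

/-- `d_{j,s}(λ,r) = (1/s!)·Σ_{p=0}^{j} c_{p,j}(r)·(λ)⁻_{s+p+j}`, with `(λ)⁻_n` the
descending Pochhammer symbol. -/
noncomputable def ddjs (r lam j s : ℕ) : ℚ :=
  (s.factorial : ℚ)⁻¹ *
    ∑ p ∈ Finset.range (j + 1), cpj r p j * (Nat.descFactorial lam (s + p + j) : ℚ)

/-- Integer powers `D^k` for `k ∈ ℤ`, where `Dinv` is a two-sided inverse of `D`. -/
def ipow {A : Type} [Monoid A] (d dinv : A) (k : ℤ) : A :=
  if 0 ≤ k then d ^ k.toNat else dinv ^ (-k).toNat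


section PSpart
open PowerSeries

lemma coeff_cG_zero (r : ℕ) : coeff 0 (cG r) = 0 := by simp [cG]

lemma coeff_cG_succ (r j : ℕ) :
    coeff (j+1) (cG r) = (Nat.choose r (j+1) : ℚ) / ((j : ℚ) + 2) := by
  simp [cG]; ring

lemma choose_cast (r j : ℕ) :
    (Nat.choose r (j+2) : ℚ) * ((j:ℚ)+2) = ((r:ℚ) - ((j:ℚ)+1)) * (Nat.choose r (j+1) : ℚ) := by
  by_cases h : j + 1 ≤ r
  · have := Nat.choose_succ_right_eq r (j+1)
    have h2 : ((r - (j+1) : ℕ) : ℚ) = (r:ℚ) - ((j:ℚ)+1) := by push_cast [h]; ring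
    calc (Nat.choose r (j+2) : ℚ) * ((j:ℚ)+2)
        = ((Nat.choose r (j+2) * (j+2) : ℕ) : ℚ) := by push_cast; ring
      _ = ((Nat.choose r (j+1) * (r - (j+1)) : ℕ) : ℚ) := by rw [this]
      _ = _ := by push_cast [h]; ring
  · have h1 : Nat.choose r (j+2) = 0 := Nat.choose_eq_zero_of_lt (by omega)
    have h2 : Nat.choose r (j+1) = 0 := Nat.choose_eq_zero_of_lt (by omega)
    simp [h1, h2]

lemma cG_ode (r : ℕ) :
    cG r + (X + X^2) * (d⁄dX ℚ (cG r)) = (r:ℚ) • (X * cG r) + (r:ℚ) • X := by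
  ext n
  rcases n with _ | n
  · simp [cG, PowerSeries.constantCoeff_mk]
  rcases n with _ | j
  · simp only [map_add, add_mul, coeff_succ_X_mul, map_smul]
    rw [show (X:ℚ⟦X⟧)^2 * (d⁄dX ℚ (cG r)) = X * (X * (d⁄dX ℚ (cG r))) by ring]
    simp [coeff_succ_X_mul, coeff_derivative, coeff_cG_succ, coeff_cG_zero,
      coeff_zero_X_mul]
  · simp only [map_add, add_mul, coeff_succ_X_mul, map_smul]
    rw [show (X:ℚ⟦X⟧)^2 * (d⁄dX ℚ (cG r)) = X * (X * (d⁄dX ℚ (cG r))) by ring]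
    simp only [coeff_succ_X_mul, coeff_derivative, coeff_cG_succ, smul_eq_mul,
      coeff_X, if_neg (by omega : ¬ (j + 2 = 1))]
    have := choose_cast r j
    field_simp
    push_cast [show j + 1 + 1 = j + 2 from rfl]
    linear_combination ((j:ℚ) + 3) * this

lemma pow_ode (r p : ℕ) :
    ((p:ℚ)+1) • ((cG r)^(p+1)) + (X + X^2) * (d⁄dX ℚ ((cG r)^(p+1)))
      = ((r:ℚ)*((p:ℚ)+1)) • (X * (cG r)^(p+1)) + ((r:ℚ)*((p:ℚ)+1)) • (X * (cG r)^p) := by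
  have h := cG_ode r
  have hD : (d⁄dX ℚ) ((cG r)^(p+1)) = ((p:ℚ)+1) • ((cG r)^p * (d⁄dX ℚ) (cG r)) := by
    rw [Derivation.leibniz_pow, Nat.add_sub_cancel, smul_eq_mul]
    rw [show ((p:ℚ)+1) = ((p+1 : ℕ) : ℚ) by push_cast; ring, Nat.cast_smul_eq_nsmul]
  rw [hD]
  simp only [smul_eq_C_mul, map_mul] at h ⊢
  linear_combination (PowerSeries.C ((p:ℚ)+1)) * (cG r)^p * h

lemma recA (r p j : ℕ) :
    ((p:ℚ)+1+(j:ℚ)+1) * coeff (j+1) ((cG r)^(p+1))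
      = ((r:ℚ)*((p:ℚ)+1) - (j:ℚ)) * coeff j ((cG r)^(p+1))
        + ((r:ℚ)*((p:ℚ)+1)) * coeff j ((cG r)^p) := by
  have h := congrArg (fun f => coeff (j+1) f) (pow_ode r p)
  simp only [map_add, add_mul, map_smul, smul_eq_mul, coeff_succ_X_mul,
    show (X:ℚ⟦X⟧)^2 * (d⁄dX ℚ ((cG r)^(p+1))) = X * (X * (d⁄dX ℚ ((cG r)^(p+1)))) by ring]
    at h
  rcases j with _ | i
  · simp only [coeff_zero_X_mul, coeff_derivative] at h ⊢
    push_cast at h ⊢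
    linarith [h]
  · simp only [coeff_succ_X_mul, coeff_derivative] at h ⊢
    push_cast at h ⊢
    linarith [h]

lemma cpj_zero_left (r j : ℕ) : cpj r 0 j = if j = 0 then 1 else 0 := by
  simp [cpj, PowerSeries.coeff_one]

lemma cpj_eq_zero (r p j : ℕ) (h : j < p) : cpj r p j = 0 := by
  have hx : (X : ℚ⟦X⟧) ^ p ∣ (cG r) ^ p :=
    pow_dvd_pow_of_dvd (X_dvd_iff.2 (by simp [cG, PowerSeries.constantCoeff_mk])) p
  have := (X_pow_dvd_iff.1 hx) j h
  simp [cpj, this]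

lemma rec_cpj (r p j : ℕ) :
    ((p:ℚ)+(j:ℚ)+2) * cpj r (p+1) (j+1)
      = ((r:ℚ)*((p:ℚ)+1) - (j:ℚ)) * cpj r (p+1) j + (r:ℚ) * cpj r p j := by
  have h := recA r p j
  have hp : ((p.factorial : ℚ)) ≠ 0 := Nat.cast_ne_zero.2 (Nat.factorial_ne_zero p)
  have hp1 : ((p:ℚ)+1) ≠ 0 := by positivity
  simp only [cpj, Nat.factorial_succ]
  push_cast
  field_simp
  linear_combination h


lemma descQ2 (l m : ℕ) :
    (l.descFactorial (m+1) : ℚ) = ((l:ℚ) - (m:ℚ)) * (l.descFactorial m : ℚ) := by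
  by_cases h : m ≤ l
  · rw [Nat.descFactorial_succ]
    push_cast [Nat.cast_sub h]
    ring
  · rw [Nat.descFactorial_eq_zero_iff_lt.2 (by omega),
      Nat.descFactorial_eq_zero_iff_lt.2 (by omega)]
    simp

lemma descQ1 (l n : ℕ) :
    ((l+1).descFactorial n : ℚ)
      = (l.descFactorial n : ℚ) + (n:ℚ) * (l.descFactorial (n-1) : ℚ) := by
  rcases n with _ | m
  · simp
  · rw [Nat.succ_descFactorial_succ, descQ2 l m]
    push_cast
    ring

lemma ddjs_eq_zero (r lam j s : ℕ) (h : lam < j + s) : ddjs r lam j s = 0 := by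
  rw [ddjs]
  rw [Finset.sum_eq_zero, mul_zero]
  intro p _
  rw [Nat.descFactorial_eq_zero_iff_lt.2 (by omega), Nat.cast_zero, mul_zero]

/-- the core third-sum identity -/
lemma core (r lam j s : ℕ) :
    ∑ p ∈ Finset.range (j+2), cpj r p (j+1) * (((p:ℚ)+(j:ℚ)+1) * (lam.descFactorial (s+p+j) : ℚ))
      = ((r:ℚ)*((lam:ℚ)-(s:ℚ)) - ((r:ℚ)+1)*(j:ℚ))
          * ∑ q ∈ Finset.range (j+1), cpj r q j * (lam.descFactorial (s+q+j) : ℚ) := by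
  rw [Finset.sum_range_succ']
  rw [show cpj r 0 (j+1) * ((((0:ℕ):ℚ)+(j:ℚ)+1) * (lam.descFactorial (s+0+j) : ℚ)) = 0 by
    rw [cpj_zero_left]; simp]
  rw [add_zero]
  have hstep : ∀ p ∈ Finset.range (j+1),
      cpj r (p+1) (j+1) * (((((p+1:ℕ)):ℚ)+(j:ℚ)+1) * (lam.descFactorial (s+(p+1)+j) : ℚ))
        = ((r:ℚ)*((p:ℚ)+1) - (j:ℚ)) * cpj r (p+1) j * (lam.descFactorial (s+(p+1)+j) : ℚ)
          + (r:ℚ) * (((lam:ℚ) - ((s:ℚ)+(p:ℚ)+(j:ℚ))) * (cpj r p j * (lam.descFactorial (s+p+j) : ℚ))) := by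
    intro p _
    have h2 : (lam.descFactorial (s+(p+1)+j) : ℚ)
        = ((lam:ℚ) - ((s:ℚ)+(p:ℚ)+(j:ℚ))) * (lam.descFactorial (s+p+j) : ℚ) := by
      rw [show s+(p+1)+j = (s+p+j)+1 by omega, descQ2]
      push_cast; ring
    have h1 := rec_cpj r p j
    rw [h2]
    push_cast
    linear_combination ((lam:ℚ) - ((s:ℚ)+(p:ℚ)+(j:ℚ))) * (lam.descFactorial (s+p+j) : ℚ) * h1
  rw [Finset.sum_congr rfl hstep, Finset.sum_add_distrib]
  have hf0 : ((r:ℚ)*((0:ℕ):ℚ) - (j:ℚ)) * cpj r 0 j * (lam.descFactorial (s+0+j) : ℚ) = 0 := by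
    rcases j with _ | j' <;> simp [cpj_zero_left]
  have hftop0 : True := trivial
  have hftop : ((r:ℚ)*((j+1:ℕ):ℚ) - (j:ℚ)) * cpj r (j+1) j * (lam.descFactorial (s+(j+1)+j) : ℚ) = 0 := by
    rw [cpj_eq_zero r (j+1) j (by omega)]; ring
  have e0 : ∑ k ∈ Finset.range (j+1),
        ((r:ℚ)*((k:ℚ)+1) - (j:ℚ)) * cpj r (k+1) j * (lam.descFactorial (s+(k+1)+j) : ℚ)
      = ∑ q ∈ Finset.range (j+1),
        ((r:ℚ)*(q:ℚ) - (j:ℚ)) * cpj r q j * (lam.descFactorial (s+q+j) : ℚ) := by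
    have h1 := Finset.sum_range_succ'
      (fun q => ((r:ℚ)*((q:ℕ):ℚ) - (j:ℚ)) * cpj r q j * (lam.descFactorial (s+q+j) : ℚ)) (j+1)
    have h2 := Finset.sum_range_succ
      (fun q => ((r:ℚ)*((q:ℕ):ℚ) - (j:ℚ)) * cpj r q j * (lam.descFactorial (s+q+j) : ℚ)) (j+1)
    rw [hftop, add_zero] at h2
    rw [← h2, h1, hf0, add_zero]
    apply Finset.sum_congr rfl
    intro k _
    push_cast
    ring
  calc ∑ k ∈ Finset.range (j+1),
        ((r:ℚ)*((k:ℚ)+1) - (j:ℚ)) * cpj r (k+1) j * (lam.descFactorial (s+(k+1)+j) : ℚ)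
      + ∑ k ∈ Finset.range (j+1),
        (r:ℚ) * (((lam:ℚ) - ((s:ℚ)+(k:ℚ)+(j:ℚ))) * (cpj r k j * (lam.descFactorial (s+k+j) : ℚ)))
      = ∑ q ∈ Finset.range (j+1),
          (((r:ℚ)*(q:ℚ) - (j:ℚ)) * cpj r q j * (lam.descFactorial (s+q+j) : ℚ)
           + (r:ℚ) * (((lam:ℚ) - ((s:ℚ)+(q:ℚ)+(j:ℚ))) * (cpj r q j * (lam.descFactorial (s+q+j) : ℚ)))) := by
        rw [e0, Finset.sum_add_distrib]
    _ = _ := by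
        rw [Finset.mul_sum]
        apply Finset.sum_congr rfl
        intro q _
        ring

lemma keyE (r lam j s : ℕ) :
    ∑ p ∈ Finset.range (j+1), cpj r p j * ((lam+1).descFactorial (s+p+j) : ℚ)
      = ∑ p ∈ Finset.range (j+1), cpj r p j * (lam.descFactorial (s+p+j) : ℚ)
        + (s:ℚ) * ∑ p ∈ Finset.range (j+1), cpj r p j * (lam.descFactorial (s-1+p+j) : ℚ)
        + ∑ p ∈ Finset.range (j+1), cpj r p j * (((p:ℚ)+(j:ℚ)) * (lam.descFactorial (s+p+j-1) : ℚ)) := by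
  rw [Finset.mul_sum, ← Finset.sum_add_distrib, ← Finset.sum_add_distrib]
  apply Finset.sum_congr rfl
  intro p _
  rw [descQ1]
  rcases s with _ | s'
  · simp only [Nat.zero_add, Nat.zero_sub, Nat.cast_zero]
    push_cast
    ring
  · rw [show s'+1+p+j-1 = s'+p+j from by omega, show s'+1-1+p+j = s'+p+j from by omega]
    push_cast
    ring

lemma ddjs_succ (r lam j s : ℕ) :
    ddjs r (lam+1) j s
      = ddjs r lam j s
        + (if s = 0 then 0 else ddjs r lam j (s-1))
        + (if j = 0 then 0 else
            ((r:ℚ)*((lam:ℚ)-(s:ℚ)) - ((r:ℚ)+1)*((j:ℚ)-1)) * ddjs r lam (j-1) s) := by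
  have hthird : ∑ p ∈ Finset.range (j+1), cpj r p j * (((p:ℚ)+(j:ℚ)) * (lam.descFactorial (s+p+j-1) : ℚ))
      = (if j = 0 then 0 else
          ((r:ℚ)*((lam:ℚ)-(s:ℚ)) - ((r:ℚ)+1)*((j:ℚ)-1))
            * ∑ q ∈ Finset.range (j-1+1), cpj r q (j-1) * (lam.descFactorial (s+q+(j-1)) : ℚ)) := by
    rcases j with _ | j'
    · simp [cpj_zero_left]
    · rw [if_neg (by omega)]
      have e1 : ∑ p ∈ Finset.range (j'+2), cpj r p (j'+1) * (((p:ℚ)+((j'+1:ℕ):ℚ)) * (lam.descFactorial (s+p+(j'+1)-1) : ℚ))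
          = ∑ p ∈ Finset.range (j'+2), cpj r p (j'+1) * (((p:ℚ)+(j':ℚ)+1) * (lam.descFactorial (s+p+j') : ℚ)) := by
        apply Finset.sum_congr rfl
        intro p _
        rw [show s+p+(j'+1)-1 = s+p+j' from by omega]
        push_cast
        ring
      rw [e1, core r lam j' s]
      norm_num
  have hsecond : (s:ℚ) * ((s.factorial : ℚ))⁻¹
      = (if s = 0 then 0 else ((s-1).factorial : ℚ)⁻¹) := by
    rcases s with _ | s'
    · simp
    · rw [if_neg (by omega)]
      rw [Nat.factorial_succ, show s'+1-1 = s' from rfl]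
      have h1 : ((s'.factorial : ℚ)) ≠ 0 := Nat.cast_ne_zero.2 (Nat.factorial_ne_zero s')
      have h2 : ((s':ℚ)+1) ≠ 0 := by positivity
      push_cast
      field_simp
  simp only [ddjs]
  rw [keyE, hthird]
  rw [mul_add, mul_add]
  congr 1
  · congr 1
    rcases s with _ | s'
    · simp
    · rw [show s'+1-1 = s' from rfl, Nat.factorial_succ]
      have hh1 : ((s'.factorial : ℚ)) ≠ 0 := Nat.cast_ne_zero.2 (Nat.factorial_ne_zero s')
      have hh2 : ((s':ℚ)+1) ≠ 0 := by positivity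
      push_cast
      field_simp
  · rcases j with _ | j'
    · simp
    · rw [if_neg (by omega), if_neg (by omega)]
      ring

end PSpart

section Op

variable {A : Type} [Ring A] [Algebra ℚ A] (d dinv xv : A)

lemma ipow_eq (h1 : d * dinv = 1) (h2 : dinv * d = 1) (k : ℤ) :
    ipow d dinv k = (((⟨d, dinv, h1, h2⟩ : Aˣ) ^ k : Aˣ) : A) := by
  rcases le_or_gt 0 k with h | h
  · obtain ⟨n, rfl⟩ := Int.eq_ofNat_of_zero_le h
    rw [ipow, if_pos (by exact_mod_cast Int.ofNat_nonneg n), zpow_natCast, Units.val_pow_eq_pow_val,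
      Int.toNat_natCast]
  · obtain ⟨n, rfl⟩ : ∃ n : ℕ, k = Int.negSucc n := by
      refine ⟨(-k).toNat - 1, ?_⟩
      rw [Int.negSucc_eq]
      push_cast
      omega
    rw [ipow, if_neg (by omega), zpow_negSucc]
    have : (((⟨d, dinv, h1, h2⟩ : Aˣ) ^ (n+1))⁻¹ : Aˣ)
        = ((⟨d, dinv, h1, h2⟩ : Aˣ)⁻¹) ^ (n+1) := by
      rw [inv_pow]
    rw [this]
    rw [Units.val_pow_eq_pow_val]
    congr 1

lemma ipow_mul_d_pow (h1 : d * dinv = 1) (h2 : dinv * d = 1) (k : ℤ) (n : ℕ) :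
    ipow d dinv k * d ^ n = ipow d dinv (k + n) := by
  rw [ipow_eq d dinv h1 h2 k, ipow_eq d dinv h1 h2 (k + n)]
  have : (d : A) ^ n = (((⟨d, dinv, h1, h2⟩ : Aˣ) ^ (n:ℤ) : Aˣ) : A) := by
    rw [zpow_natCast, Units.val_pow_eq_pow_val]
  rw [this, ← Units.val_mul, ← zpow_add]

lemma d_pow_comm (h3 : d * xv - xv * d = 1) (n : ℕ) :
    d ^ (n+1) * xv = xv * d ^ (n+1) + (((n:ℚ))+1) • d ^ n := by
  induction n with
  | zero =>
    rw [show (0:ℕ)+1 = 1 from rfl, pow_one, pow_zero,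
      show ((0:ℕ):ℚ)+1 = 1 by norm_num, one_smul]
    exact sub_eq_iff_eq_add'.mp h3
  | succ m ih =>
    have e : d ^ (m+2) * xv = d * (d ^ (m+1) * xv) := by
      rw [← mul_assoc, ← pow_succ']
    rw [e, ih]
    rw [mul_add, ← mul_assoc, sub_eq_iff_eq_add'.mp h3]
    rw [mul_smul_comm]
    rw [add_mul, one_mul, mul_assoc, ← pow_succ']
    rw [add_assoc]
    congr 1
    rw [← pow_succ']
    push_cast
    module

lemma dinv_comm (h1 : d * dinv = 1) (h2 : dinv * d = 1) (h3 : d * xv - xv * d = 1) : dinv * xv = xv * dinv - dinv * dinv := by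
  have e1 : dinv * (xv * (d * dinv)) = dinv * xv := by rw [h1, mul_one]
  have e2 : xv * d = d * xv - 1 := eq_sub_iff_add_eq.mpr (sub_eq_iff_eq_add'.mp h3).symm
  calc dinv * xv = dinv * (xv * (d * dinv)) := e1.symm
    _ = dinv * (xv * d) * dinv := by simp only [mul_assoc]
    _ = dinv * (d * xv - 1) * dinv := by rw [e2]
    _ = (dinv * d) * xv * dinv - dinv * dinv := by
          simp only [mul_sub, sub_mul, mul_one, mul_assoc]
    _ = xv * dinv - dinv * dinv := by rw [h2, one_mul]

lemma dinv_pow_comm (h1 : d * dinv = 1) (h2 : dinv * d = 1) (h3 : d * xv - xv * d = 1) (n : ℕ) :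
    dinv ^ (n+1) * xv = xv * dinv ^ (n+1) - (((n:ℚ))+1) • dinv ^ (n+2) := by
  induction n with
  | zero =>
    rw [show (0:ℕ)+1 = 1 from rfl, pow_one, dinv_comm d dinv xv h1 h2 h3,
      show ((0:ℕ):ℚ)+1 = 1 by norm_num, one_smul, show (0:ℕ)+2 = 2 from rfl, pow_two]
  | succ m ih =>
    have e : dinv ^ (m+2) * xv = dinv * (dinv ^ (m+1) * xv) := by
      rw [← mul_assoc, ← pow_succ']
    rw [e, ih]
    rw [mul_sub, ← mul_assoc, dinv_comm d dinv xv h1 h2 h3]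
    rw [mul_smul_comm]
    rw [sub_mul, mul_assoc, ← pow_succ']
    rw [← pow_succ']
    push_cast
    rw [add_smul, one_smul]
    have : dinv * dinv * dinv ^ (m+1) = dinv ^ (m+3) := by
      rw [mul_assoc, ← pow_succ', ← pow_succ']
    rw [this]
    push_cast
    module

lemma ipow_comm (h1 : d * dinv = 1) (h2 : dinv * d = 1) (h3 : d * xv - xv * d = 1) (k : ℤ) :
    ipow d dinv k * xv = xv * ipow d dinv k + ((k:ℚ)) • ipow d dinv (k-1) := by
  rcases le_or_gt 0 k with h | h
  · rcases Int.eq_ofNat_of_zero_le h with ⟨n, rfl⟩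
    rcases n with _ | m
    · simp [ipow]
    · have e1 : ipow d dinv ((m+1:ℕ):ℤ) = d ^ (m+1) := by
        rw [ipow, if_pos (by positivity), Int.toNat_natCast]
      have e2 : ipow d dinv (((m+1:ℕ):ℤ)-1) = d ^ m := by
        rw [ipow, if_pos (by omega)]
        congr 1
        omega
      rw [e1, e2, d_pow_comm d xv h3 m,
        show (((m+1:ℕ):ℤ):ℚ) = (m:ℚ)+1 from by push_cast; ring]
  · obtain ⟨n, rfl⟩ : ∃ n : ℕ, k = Int.negSucc n := by
      refine ⟨(-k).toNat - 1, ?_⟩; rw [Int.negSucc_eq]; push_cast; omega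
    have e1 : ipow d dinv (Int.negSucc n) = dinv ^ (n+1) := by
      rw [ipow, if_neg (by omega)]; congr 1
    have e2 : ipow d dinv ((Int.negSucc n)-1) = dinv ^ (n+2) := by
      rw [ipow, if_neg (by omega)]; congr 1
    rw [e1, e2, dinv_pow_comm d dinv xv h1 h2 h3 n]
    have : ((Int.negSucc n : ℤ) : ℚ) = -(((n:ℚ))+1) := by
      push_cast [Int.negSucc_eq]; ring
    rw [this, neg_smul, sub_eq_add_neg]

end Op

/-- In any `ℚ`-algebra of pseudodifferential operators — i.e. any `ℚ`-algebra with
elements `xv` (multiplication by `x`), `d` (`∂`) and `dinv` (`∂⁻¹`) satisfying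
`d·dinv = dinv·d = 1` and `[d, xv] = 1` — the operator `L = ∂^r + C·x` satisfies, for
every non-negative integer `λ`, the exact operator identity
`L^λ = Σ_{j,s} C^{j+s}·d_{j,s}(λ,r)·x^s·∂^{r(λ-s)-(r+1)j}`
(the sum over `0 ≤ j, s ≤ λ` containing all the nonzero terms). -/
theorem stmt17 (r : ℕ) (hr : 2 ≤ r)
    (A : Type) [Ring A] [Algebra ℚ A] (d dinv xv : A)
    (h1 : d * dinv = 1) (h2 : dinv * d = 1) (h3 : d * xv - xv * d = 1)
    (C : ℚ) (lam : ℕ) :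
    (d ^ r + C • xv) ^ lam
      = ∑ j ∈ Finset.range (lam + 1), ∑ s ∈ Finset.range (lam + 1),
          (C ^ (j + s) * ddjs r lam j s) •
            (xv ^ s * ipow d dinv ((r : ℤ) * ((lam : ℤ) - (s : ℤ)) - ((r : ℤ) + 1) * (j : ℤ))) := by
  induction lam with
  | zero =>
    rw [pow_zero, Finset.sum_range_one, Finset.sum_range_one]
    have hd : ddjs r 0 0 0 = 1 := by
      rw [ddjs, Finset.sum_range_one]
      norm_num [cpj]
    rw [hd]
    norm_num [ipow]
  | succ n ih =>
    have zer : ∀ j s : ℕ, n < j + s →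
        (C ^ (j + s) * ddjs r n j s) •
          (xv ^ s * ipow d dinv ((r:ℤ) * ((n:ℤ) - (s:ℤ)) - ((r:ℤ) + 1) * (j:ℤ))) = 0 := by
      intro j s h
      rw [ddjs_eq_zero r n j s h, mul_zero, zero_smul]
    have hext : (∑ j ∈ Finset.range (n+2), ∑ s ∈ Finset.range (n+2),
          (C ^ (j + s) * ddjs r n j s) •
            (xv ^ s * ipow d dinv ((r:ℤ) * ((n:ℤ) - (s:ℤ)) - ((r:ℤ) + 1) * (j:ℤ))))
        = ∑ j ∈ Finset.range (n+1), ∑ s ∈ Finset.range (n+1),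
          (C ^ (j + s) * ddjs r n j s) •
            (xv ^ s * ipow d dinv ((r:ℤ) * ((n:ℤ) - (s:ℤ)) - ((r:ℤ) + 1) * (j:ℤ))) := by
      rw [Finset.sum_range_succ, Finset.sum_eq_zero (fun s _ => zer (n+1) s (by omega)),
        add_zero]
      refine Finset.sum_congr rfl fun j _ => ?_
      rw [Finset.sum_range_succ, zer j (n+1) (by omega), add_zero]
    have hterm : ∀ j s : ℕ,
        ((C ^ (j + s) * ddjs r n j s) •
          (xv ^ s * ipow d dinv ((r:ℤ) * ((n:ℤ) - (s:ℤ)) - ((r:ℤ) + 1) * (j:ℤ))))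
          * (d ^ r + C • xv)
        = (C ^ (j + s) * ddjs r n j s) •
            (xv ^ s * ipow d dinv (((r:ℤ) * ((n:ℤ) - (s:ℤ)) - ((r:ℤ) + 1) * (j:ℤ)) + (r:ℕ)))
          + (C ^ (j + s) * ddjs r n j s * C) •
            (xv ^ (s+1) * ipow d dinv ((r:ℤ) * ((n:ℤ) - (s:ℤ)) - ((r:ℤ) + 1) * (j:ℤ)))
          + (C ^ (j + s) * ddjs r n j s * C *
              (((r:ℤ) * ((n:ℤ) - (s:ℤ)) - ((r:ℤ) + 1) * (j:ℤ) : ℤ) : ℚ)) •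
            (xv ^ s * ipow d dinv (((r:ℤ) * ((n:ℤ) - (s:ℤ)) - ((r:ℤ) + 1) * (j:ℤ)) - 1)) := by
      intro j s
      rw [mul_add, add_assoc]
      congr 1
      · rw [smul_mul_assoc, mul_assoc (xv^s), ipow_mul_d_pow d dinv h1 h2]
      · rw [smul_mul_assoc, mul_smul_comm, smul_smul, mul_assoc (xv^s),
          ipow_comm d dinv xv h1 h2 h3, mul_add, ← mul_assoc (xv^s) xv, ← pow_succ,
          mul_smul_comm, smul_add, smul_smul]
    rw [pow_succ, ih, ← hext, Finset.sum_mul]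
    have hexp : ∀ j ∈ Finset.range (n+2),
        (∑ s ∈ Finset.range (n+2),
          (C ^ (j + s) * ddjs r n j s) •
            (xv ^ s * ipow d dinv ((r:ℤ) * ((n:ℤ) - (s:ℤ)) - ((r:ℤ) + 1) * (j:ℤ))))
          * (d ^ r + C • xv)
        = ∑ s ∈ Finset.range (n+2),
            ((C ^ (j + s) * ddjs r n j s) •
              (xv ^ s * ipow d dinv (((r:ℤ) * ((n:ℤ) - (s:ℤ)) - ((r:ℤ) + 1) * (j:ℤ)) + (r:ℕ)))
            + (C ^ (j + s) * ddjs r n j s * C) •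
              (xv ^ (s+1) * ipow d dinv ((r:ℤ) * ((n:ℤ) - (s:ℤ)) - ((r:ℤ) + 1) * (j:ℤ)))
            + (C ^ (j + s) * ddjs r n j s * C *
                (((r:ℤ) * ((n:ℤ) - (s:ℤ)) - ((r:ℤ) + 1) * (j:ℤ) : ℤ) : ℚ)) •
              (xv ^ s * ipow d dinv (((r:ℤ) * ((n:ℤ) - (s:ℤ)) - ((r:ℤ) + 1) * (j:ℤ)) - 1))) := by
      intro j _
      rw [Finset.sum_mul]
      exact Finset.sum_congr rfl fun s _ => hterm j s
    rw [Finset.sum_congr rfl hexp]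
    have hBs : ∀ j s : ℕ,
        (C ^ (j + s) * ddjs r (n+1) j s) •
          (xv ^ s * ipow d dinv ((r:ℤ) * ((((n+1:ℕ)):ℤ) - (s:ℤ)) - ((r:ℤ) + 1) * (j:ℤ)))
        = (C ^ (j + s) * ddjs r n j s) •
            (xv ^ s * ipow d dinv ((r:ℤ) * ((((n+1:ℕ)):ℤ) - (s:ℤ)) - ((r:ℤ) + 1) * (j:ℤ)))
          + (C ^ (j + s) * (if s = 0 then 0 else ddjs r n j (s-1))) •
            (xv ^ s * ipow d dinv ((r:ℤ) * ((((n+1:ℕ)):ℤ) - (s:ℤ)) - ((r:ℤ) + 1) * (j:ℤ)))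
          + (C ^ (j + s) * (if j = 0 then 0 else
              ((r:ℚ)*((n:ℚ)-(s:ℚ)) - ((r:ℚ)+1)*((j:ℚ)-1)) * ddjs r n (j-1) s)) •
            (xv ^ s * ipow d dinv ((r:ℤ) * ((((n+1:ℕ)):ℤ) - (s:ℤ)) - ((r:ℤ) + 1) * (j:ℤ))) := by
      intro j s
      rw [ddjs_succ, mul_add, mul_add, add_smul, add_smul]
    rw [Finset.sum_congr rfl (fun j _ => Finset.sum_congr rfl (fun s _ => hBs j s))]
    simp only [Finset.sum_add_distrib]
    congr 1
    congr 1
    · -- G1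
      refine Finset.sum_congr rfl fun j _ => Finset.sum_congr rfl fun s _ => ?_
      rw [show ((r:ℤ) * ((n:ℤ) - (s:ℤ)) - ((r:ℤ) + 1) * (j:ℤ)) + (r:ℕ)
          = (r:ℤ) * ((((n+1:ℕ)):ℤ) - (s:ℤ)) - ((r:ℤ) + 1) * (j:ℤ) from by push_cast; ring]
    · -- G2
      refine Finset.sum_congr rfl fun j _ => ?_
      conv_lhs => rw [Finset.sum_range_succ]
      conv_rhs => rw [Finset.sum_range_succ']
      rw [show (C ^ (j + (n+1)) * ddjs r n j (n+1) * C) •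
            (xv ^ ((n+1)+1) * ipow d dinv ((r:ℤ) * ((n:ℤ) - ((n+1:ℕ):ℤ)) - ((r:ℤ) + 1) * (j:ℤ))) = 0 from by
          rw [ddjs_eq_zero r n j (n+1) (by omega), mul_zero, zero_mul, zero_smul]]
      rw [show (C ^ (j + 0) * (if (0:ℕ) = 0 then 0 else ddjs r n j (0-1))) •
            (xv ^ 0 * ipow d dinv ((r:ℤ) * ((((n+1:ℕ)):ℤ) - ((0:ℕ):ℤ)) - ((r:ℤ) + 1) * (j:ℤ))) = 0 from by
          rw [if_pos rfl, mul_zero, zero_smul]]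
      rw [add_zero, add_zero]
      refine Finset.sum_congr rfl fun s _ => ?_
      rw [if_neg (Nat.succ_ne_zero s), Nat.add_sub_cancel]
      rw [show ((r:ℤ) * ((((n+1:ℕ)):ℤ) - (((s+1:ℕ)):ℤ)) - ((r:ℤ) + 1) * (j:ℤ))
          = (r:ℤ) * ((n:ℤ) - (s:ℤ)) - ((r:ℤ) + 1) * (j:ℤ) from by push_cast; ring]
      rw [show C ^ (j + (s+1)) * ddjs r n j s
          = C ^ (j + s) * ddjs r n j s * C from by
        rw [show j + (s+1) = (j+s)+1 from by omega, pow_succ]; ring]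
    · -- G3
      conv_lhs => rw [Finset.sum_range_succ]
      conv_rhs => rw [Finset.sum_range_succ']
      rw [Finset.sum_eq_zero (fun s _ => by
        rw [ddjs_eq_zero r n (n+1) s (by omega), mul_zero, zero_mul, zero_mul, zero_smul] :
        ∀ s ∈ Finset.range (n+2), (C ^ ((n+1) + s) * ddjs r n (n+1) s * C *
            (((r:ℤ) * ((n:ℤ) - (s:ℤ)) - ((r:ℤ) + 1) * ((n+1:ℕ):ℤ) : ℤ) : ℚ)) •
          (xv ^ s * ipow d dinv (((r:ℤ) * ((n:ℤ) - (s:ℤ)) - ((r:ℤ) + 1) * ((n+1:ℕ):ℤ)) - 1)) = 0)]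
      rw [Finset.sum_eq_zero (fun s _ => by
        rw [if_pos rfl, mul_zero, zero_smul] :
        ∀ s ∈ Finset.range (n+2), (C ^ (0 + s) * (if (0:ℕ) = 0 then 0 else
            ((r:ℚ)*((n:ℚ)-(s:ℚ)) - ((r:ℚ)+1)*(((0:ℕ):ℚ)-1)) * ddjs r n (0-1) s)) •
          (xv ^ s * ipow d dinv ((r:ℤ) * ((((n+1:ℕ)):ℤ) - (s:ℤ)) - ((r:ℤ) + 1) * ((0:ℕ):ℤ))) = 0)]
      rw [add_zero, add_zero]
      refine Finset.sum_congr rfl fun j _ => Finset.sum_congr rfl fun s _ => ?_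
      rw [if_neg (Nat.succ_ne_zero j), Nat.add_sub_cancel]
      rw [show ((r:ℤ) * ((((n+1:ℕ)):ℤ) - (s:ℤ)) - ((r:ℤ) + 1) * (((j+1:ℕ)):ℤ))
          = ((r:ℤ) * ((n:ℤ) - (s:ℤ)) - ((r:ℤ) + 1) * (j:ℤ)) - 1 from by push_cast; ring]
      rw [show C ^ ((j+1) + s) * (((r:ℚ)*((n:ℚ)-(s:ℚ)) - ((r:ℚ)+1)*((((j+1:ℕ)):ℚ)-1)) * ddjs r n j s)
          = C ^ (j + s) * ddjs r n j s * C *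
              (((r:ℤ) * ((n:ℤ) - (s:ℤ)) - ((r:ℤ) + 1) * (j:ℤ) : ℤ) : ℚ) from by
        rw [show (j+1) + s = (j+s)+1 from by omega, pow_succ]; push_cast; ring]
end
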